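/- Let X be a set with a binary operation family x +_p y for p ∈ (0,1) satisfying idempotence (x +_p x = x), parametric commutativity (x +_p y = y +_{1-p} x), and parametric associativity ((x +_q y) +_p z = x +_{pq} (y +_{p(1-q)/(1-pq)} z) for pq ≠ 1). Then defining n-ary operations by the projection rule and the recursion ∑_{i=0}^n p_i x_i = (∑_{j=0}^{n-1} (p_j/(1-p_n)) x_j) +_{1-p_n} x_n (when p_n ≠ 1) makes X a convex algebra, i.e., the projection and barycenter axioms hold for all n-ary convex combinations. -/

import Mathlib

variable {A : Type*}

/-- The `n`-ary convex combination defined from binary combinations by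
`∑_{i=0}^n p_i x_i = (∑_{j=0}^{n-1} (p_j/(1-p_n)) x_j) +_{1-p_n} x_n`.
Here `comb p x y` denotes `x +_p y`, i.e. weight `p` on `x`. -/
noncomputable def naryComb (comb : ℝ → A → A → A) : (n : ℕ) → (Fin (n + 1) → ℝ) → (Fin (n + 1) → A) → A
  | 0, _, x => x 0
  | n + 1, p, x =>
      comb (1 - p (Fin.last (n + 1)))
        (naryComb comb n (fun j => p j.castSucc / (1 - p (Fin.last (n + 1))))
          (fun j => x j.castSucc))
        (x (Fin.last (n + 1)))

section
variable (comb : ℝ → A → A → A)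
variable (idem : ∀ p : ℝ, 0 < p → p < 1 → ∀ x, comb p x x = x)
variable (comm : ∀ p : ℝ, 0 < p → p < 1 → ∀ x y, comb p x y = comb (1 - p) y x)
variable (assoc : ∀ p q : ℝ, 0 < p → p < 1 → 0 < q → q < 1 → ∀ x y z,
      comb p (comb q x y) z = comb (p * q) x (comb (p * (1 - q) / (1 - p * q)) y z))
variable (comb_one : ∀ x y : A, comb 1 x y = x)
variable (comb_zero : ∀ x y : A, comb 0 x y = y)

include idem comm assoc comb_one comb_zero in
set_option maxHeartbeats 1000000 in
lemma combB {t a b : ℝ} (ht0 : 0 ≤ t) (ht1 : t ≤ 1) (ha0 : 0 ≤ a) (ha1 : a ≤ 1)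
    (hb0 : 0 ≤ b) (hb1 : b ≤ 1) (x y z : A) :
    comb t (comb a x z) (comb b y z)
      = comb (t * a + (1 - t) * b) (comb (t * a / (t * a + (1 - t) * b)) x y) z := by
  by_cases ht0' : t = 0
  · subst ht0'
    simp only [comb_zero, zero_mul, sub_zero, one_mul, zero_div, zero_add]
  by_cases ht1' : t = 1
  · subst ht1'
    simp only [comb_one, one_mul, sub_self, zero_mul, add_zero]
    by_cases ha : a = 0
    · subst ha; simp only [comb_zero, zero_div]
    · rw [div_self ha, comb_one]
  have ht0 : 0 < t := lt_of_le_of_ne ht0 (Ne.symm ht0')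
  have ht1 : t < 1 := lt_of_le_of_ne ht1 ht1'
  have h1t : 0 < 1 - t := by linarith
  by_cases ha0' : a = 0
  · subst ha0'
    simp only [comb_zero, mul_zero, zero_mul, zero_add, zero_div]
    by_cases hb : b = 0
    · subst hb; simp only [mul_zero, comb_zero]; exact idem t ht0 ht1 z
    by_cases hb1' : b = 1
    · subst hb1'; rw [comb_one, mul_one, comm t ht0 ht1]
    have hb0 : 0 < b := lt_of_le_of_ne hb0 (Ne.symm hb)
    have hb1 : b < 1 := lt_of_le_of_ne hb1 hb1'
    rw [comm t ht0 ht1, assoc (1-t) b (by linarith) (by linarith) hb0 hb1]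
    rw [idem ((1-t)*(1-b)/(1-(1-t)*b)) (div_pos (mul_pos h1t (by linarith)) (by nlinarith)) (by
      rw [div_lt_one (by nlinarith)]; nlinarith)]
  have ha0 : 0 < a := lt_of_le_of_ne ha0 (Ne.symm ha0')
  by_cases ha1' : a = 1
  · subst ha1'
    rw [comb_one, mul_one]
    by_cases hb1' : b = 1
    · subst hb1'
      rw [comb_one, mul_one, show t + (1-t) = (1:ℝ) by ring, comb_one, div_one]
    by_cases hb : b = 0
    · subst hb
      rw [comb_zero, mul_zero, add_zero, div_self (ne_of_gt ht0), comb_one]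
    have hb0 : 0 < b := lt_of_le_of_ne hb0 (Ne.symm hb)
    have hb1 : b < 1 := lt_of_le_of_ne hb1 hb1'
    have hc0 : 0 < t + (1-t)*b := by nlinarith
    have hc1 : t + (1-t)*b < 1 := by nlinarith
    have hu0 : 0 < t / (t + (1-t)*b) := by positivity
    have hu1 : t / (t + (1-t)*b) < 1 := by rw [div_lt_one hc0]; nlinarith
    rw [assoc _ _ hc0 hc1 hu0 hu1]
    have e1 : (t + (1-t)*b) * (t / (t + (1-t)*b)) = t := by field_simp
    have e2 : (t + (1-t)*b) * (1 - t / (t + (1-t)*b)) / (1 - t) = b := by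
      field_simp
      ring
    rw [e1, e2]
  have ha1 : a < 1 := lt_of_le_of_ne ha1 ha1'
  have hta1 : t * a < 1 := by nlinarith
  have hta0 : 0 < t * a := by positivity
  have hne : (1:ℝ) - t*a ≠ 0 := ne_of_gt (by linarith)
  by_cases hb : b = 0
  · subst hb
    rw [comb_zero, mul_zero, add_zero, div_self (ne_of_gt hta0), comb_one,
      assoc t a ht0 ht1 ha0 ha1,
      idem (t*(1-a)/(1-t*a)) (div_pos (mul_pos ht0 (by linarith)) (by linarith))
        (by rw [div_lt_one (by linarith)]; nlinarith)]
  by_cases hb1' : b = 1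
  · subst hb1'
    rw [comb_one, mul_one]
    have hc0 : 0 < t*a + (1-t) := by positivity
    have hc1 : t*a + (1-t) < 1 := by nlinarith
    have hu0 : 0 < t*a / (t*a + (1-t)) := by positivity
    have hu1 : t*a / (t*a + (1-t)) < 1 := by rw [div_lt_one hc0]; nlinarith
    rw [assoc _ _ hc0 hc1 hu0 hu1]
    have e1 : (t*a + (1-t)) * (t*a / (t*a + (1-t))) = t*a := by field_simp
    have e2 : (t*a + (1-t)) * (1 - t*a / (t*a + (1-t))) / (1 - t*a) = (1-t)/(1-t*a) := by
      rw [div_eq_div_iff (by linarith) (by linarith)]; field_simp; try ring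
    rw [e1, e2, assoc t a ht0 ht1 ha0 ha1]
    congr 1
    have hs0 : 0 < t*(1-a)/(1-t*a) := div_pos (mul_pos ht0 (by linarith)) (by linarith)
    have hs1 : t*(1-a)/(1-t*a) < 1 := by rw [div_lt_one (by linarith)]; nlinarith
    rw [comm _ hs0 hs1]
    congr 1
    field_simp [hne]
    ring
  have hb0 : 0 < b := lt_of_le_of_ne hb0 (Ne.symm hb)
  have hb1 : b < 1 := lt_of_le_of_ne hb1 hb1'
  -- main case
  have hc0 : 0 < t*a + (1-t)*b := by positivity
  have hc1 : t*a + (1-t)*b < 1 := by nlinarith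
  have hu0 : 0 < t*a / (t*a + (1-t)*b) := by positivity
  have hu1 : t*a / (t*a + (1-t)*b) < 1 := by rw [div_lt_one hc0]; nlinarith
  rw [assoc _ _ hc0 hc1 hu0 hu1]
  have e1 : (t*a + (1-t)*b) * (t*a / (t*a + (1-t)*b)) = t*a := by field_simp
  have e2 : (t*a + (1-t)*b) * (1 - t*a / (t*a + (1-t)*b)) / (1 - t*a) = (1-t)*b/(1-t*a) := by
    rw [div_eq_div_iff (by linarith) (by linarith)]; field_simp; try ring
  rw [e1, e2, assoc t a ht0 ht1 ha0 ha1]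
  congr 1
  have hs0 : 0 < t*(1-a)/(1-t*a) := div_pos (mul_pos ht0 (by linarith)) (by linarith)
  have hs1 : t*(1-a)/(1-t*a) < 1 := by rw [div_lt_one (by linarith)]; nlinarith
  rw [comm _ hs0 hs1]
  have h1s : 1 - t*(1-a)/(1-t*a) = (1-t)/(1-t*a) := by
    field_simp [hne]
    ring
  rw [h1s]
  have hss0 : 0 < (1-t)/(1-t*a) := div_pos (by linarith) (by linarith)
  have hss1 : (1-t)/(1-t*a) < 1 := by rw [div_lt_one (by linarith)]; nlinarith
  rw [assoc _ b hss0 hss1 hb0 hb1]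
  have hkb : (1-t)/(1-t*a) * b < 1 :=
    lt_of_le_of_lt (mul_le_of_le_one_right hss0.le hb1.le) hss1
  rw [idem ((1-t)/(1-t*a)*(1-b)/(1-(1-t)/(1-t*a)*b))
    (div_pos (mul_pos hss0 (by linarith)) (by linarith))
    (by rw [div_lt_one (by linarith)]; nlinarith [hss1, hss0, hb1, hb0])]
  rw [div_mul_eq_mul_div]

lemma zero_of_one {n : ℕ} {p : Fin n → ℝ} {j : Fin n}
    (hp : ∀ i, 0 ≤ p i) (hs : (∑ i, p i) = 1) (hj : p j = 1) {i : Fin n} (hij : i ≠ j) :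
    p i = 0 := by
  have h0 : ∑ i ∈ Finset.univ.erase j, p i = 0 := by
    have h := Finset.add_sum_erase Finset.univ p (Finset.mem_univ j)
    rw [hs, hj] at h
    linarith
  exact (Finset.sum_eq_zero_iff_of_nonneg (fun i _ => hp i)).mp h0 i
    (Finset.mem_erase.mpr ⟨hij, Finset.mem_univ i⟩)

include comb_one comb_zero in
lemma projL : ∀ (n : ℕ) (p : Fin (n + 1) → ℝ) (x : Fin (n + 1) → A) (j : Fin (n + 1)),
    (∀ i, 0 ≤ p i) → (∑ i, p i) = 1 → p j = 1 → naryComb comb n p x = x j := by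
  intro n
  induction n with
  | zero => intro p x j _ _ _; rw [Fin.eq_zero j]; rfl
  | succ n IH =>
    intro p x j hp hps hpj
    by_cases hj : j = Fin.last (n+1)
    · subst hj
      simp only [naryComb]
      rw [hpj, sub_self, comb_zero]
    · have hpL : p (Fin.last (n+1)) = 0 := zero_of_one hp hps hpj (Ne.symm hj)
      simp only [naryComb, hpL, sub_zero, div_one, comb_one]
      obtain ⟨j', rfl⟩ : ∃ j', Fin.castSucc j' = j := ⟨j.castPred hj, Fin.castSucc_castPred j hj⟩
      refine IH _ _ j' (fun i => hp _) ?_ hpj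
      rw [Fin.sum_univ_castSucc, hpL, add_zero] at hps
      exact hps

set_option maxHeartbeats 1000000 in
include idem comm assoc comb_one comb_zero in
lemma bary2 : ∀ (m : ℕ) (t : ℝ) (r s : Fin (m+1) → ℝ) (x : Fin (m+1) → A),
    0 ≤ t → t ≤ 1 → (∀ j, 0 ≤ r j) → (∑ j, r j) = 1 → (∀ j, 0 ≤ s j) → (∑ j, s j) = 1 →
    comb t (naryComb comb m r x) (naryComb comb m s x)
      = naryComb comb m (fun j => t * r j + (1 - t) * s j) x := by
  intro m
  induction m with
  | zero =>
    intro t r s x ht0 ht1 hr hrs hs hss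
    show comb t (x 0) (x 0) = x 0
    rcases eq_or_lt_of_le ht0 with h | h0
    · rw [← h, comb_zero]
    rcases eq_or_lt_of_le ht1 with h | h1
    · rw [h, comb_one]
    exact idem t h0 h1 _
  | succ m IH =>
    intro t r s x ht0 ht1 hr hrs hs hss
    have hrL1 : r (Fin.last (m+1)) ≤ 1 := by
      have h := Finset.single_le_sum (f := r) (fun i _ => hr i) (Finset.mem_univ (Fin.last (m+1)))
      rw [hrs] at h; exact h
    have hsL1 : s (Fin.last (m+1)) ≤ 1 := by
      have h := Finset.single_le_sum (f := s) (fun i _ => hs i) (Finset.mem_univ (Fin.last (m+1)))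
      rw [hss] at h; exact h
    simp only [naryComb]
    rw [combB comb idem comm assoc comb_one comb_zero ht0 ht1
      (by linarith [hrL1] : (0:ℝ) ≤ 1 - r (Fin.last (m+1)))
      (by linarith [hr (Fin.last (m+1))] : 1 - r (Fin.last (m+1)) ≤ 1)
      (by linarith [hsL1] : (0:ℝ) ≤ 1 - s (Fin.last (m+1)))
      (by linarith [hs (Fin.last (m+1))] : 1 - s (Fin.last (m+1)) ≤ 1)]
    have hw : 1 - (t * r (Fin.last (m+1)) + (1 - t) * s (Fin.last (m+1)))
        = t * (1 - r (Fin.last (m+1))) + (1 - t) * (1 - s (Fin.last (m+1))) := by ring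
    rw [hw]
    have hc0 : 0 ≤ t * (1 - r (Fin.last (m+1))) + (1 - t) * (1 - s (Fin.last (m+1))) :=
      add_nonneg (mul_nonneg ht0 (by linarith)) (mul_nonneg (by linarith) (by linarith))
    by_cases hc : t * (1 - r (Fin.last (m+1))) + (1 - t) * (1 - s (Fin.last (m+1))) = 0
    · rw [hc, comb_zero, comb_zero]
    have hcpos : 0 < t * (1 - r (Fin.last (m+1))) + (1 - t) * (1 - s (Fin.last (m+1))) :=
      lt_of_le_of_ne hc0 (Ne.symm hc)
    congr 1
    by_cases hrL : r (Fin.last (m+1)) = 1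
    · have hu : t * (1 - r (Fin.last (m+1))) / (t * (1 - r (Fin.last (m+1))) + (1 - t) * (1 - s (Fin.last (m+1)))) = 0 := by
        rw [hrL]; simp
      rw [hu, comb_zero]
      have hmul : (1 - t) * (1 - s (Fin.last (m+1))) ≠ 0 := by
        intro h; apply hc; rw [hrL] at *; simpa [h]
      have h1t : (1:ℝ) - t ≠ 0 := fun h => hmul (by rw [h]; ring)
      have h1s : (1:ℝ) - s (Fin.last (m+1)) ≠ 0 := fun h => hmul (by rw [h]; ring)
      congr 1
      funext j
      have hrj : r j.castSucc = 0 :=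
        zero_of_one hr hrs hrL (Fin.ne_last_of_lt (Fin.castSucc_lt_last j))
      rw [hrj, hrL]
      field_simp
      ring
    by_cases hsL : s (Fin.last (m+1)) = 1
    · have hceq : t * (1 - r (Fin.last (m+1))) + (1 - t) * (1 - s (Fin.last (m+1)))
          = t * (1 - r (Fin.last (m+1))) := by rw [hsL]; ring
      have htr : t * (1 - r (Fin.last (m+1))) ≠ 0 := fun h => hc (by rw [hceq, h])
      have hu : t * (1 - r (Fin.last (m+1))) / (t * (1 - r (Fin.last (m+1))) + (1 - t) * (1 - s (Fin.last (m+1)))) = 1 := by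
        rw [hceq]; exact div_self htr
      have htne : t ≠ 0 := fun h => htr (by rw [h]; ring)
      have h1r : (1:ℝ) - r (Fin.last (m+1)) ≠ 0 := fun h => htr (by rw [h]; ring)
      rw [hu, comb_one]
      congr 1
      funext j
      have hsj : s j.castSucc = 0 :=
        zero_of_one hs hss hsL (Fin.ne_last_of_lt (Fin.castSucc_lt_last j))
      rw [hsj, hsL]
      field_simp
      ring
    -- main case: r L < 1, s L < 1
    have h1r : (0:ℝ) < 1 - r (Fin.last (m+1)) := by
      rcases lt_or_eq_of_le hrL1 with h | h; · linarith
      · exact absurd h hrL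
    have h1s : (0:ℝ) < 1 - s (Fin.last (m+1)) := by
      rcases lt_or_eq_of_le hsL1 with h | h; · linarith
      · exact absurd h hsL
    have hrsum : ∑ j, r (Fin.castSucc j) / (1 - r (Fin.last (m+1))) = 1 := by
      rw [← Finset.sum_div]
      rw [Fin.sum_univ_castSucc] at hrs
      rw [show ∑ j, r (Fin.castSucc j) = 1 - r (Fin.last (m+1)) by linarith [hrs]]
      exact div_self (ne_of_gt h1r)
    have hssum : ∑ j, s (Fin.castSucc j) / (1 - s (Fin.last (m+1))) = 1 := by
      rw [← Finset.sum_div]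
      rw [Fin.sum_univ_castSucc] at hss
      rw [show ∑ j, s (Fin.castSucc j) = 1 - s (Fin.last (m+1)) by linarith [hss]]
      exact div_self (ne_of_gt h1s)
    have hu0 : 0 ≤ t * (1 - r (Fin.last (m+1))) / (t * (1 - r (Fin.last (m+1))) + (1 - t) * (1 - s (Fin.last (m+1)))) :=
      div_nonneg (mul_nonneg ht0 h1r.le) hc0
    have hu1 : t * (1 - r (Fin.last (m+1))) / (t * (1 - r (Fin.last (m+1))) + (1 - t) * (1 - s (Fin.last (m+1)))) ≤ 1 := by
      rw [div_le_one hcpos]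
      nlinarith [mul_nonneg (show (0:ℝ) ≤ 1 - t by linarith) h1s.le]
    rw [IH _ _ _ _ hu0 hu1 (fun j => div_nonneg (hr _) h1r.le) hrsum
      (fun j => div_nonneg (hs _) h1s.le) hssum]
    congr 1
    funext j
    field_simp
    ring

set_option maxHeartbeats 1000000 in
include idem comm assoc comb_one comb_zero in
lemma baryL : ∀ (n m : ℕ) (p : Fin (n + 1) → ℝ) (q : Fin (n + 1) → Fin (m + 1) → ℝ)
    (x : Fin (m + 1) → A),
    (∀ i, 0 ≤ p i) → (∑ i, p i) = 1 →
    (∀ i j, 0 ≤ q i j) → (∀ i, (∑ j, q i j) = 1) →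
    naryComb comb n p (fun i => naryComb comb m (q i) x) =
      naryComb comb m (fun j => ∑ i, p i * q i j) x := by
  intro n
  induction n with
  | zero =>
    intro m p q x hp hps hq hqs
    have hp0 : p 0 = 1 := by rw [← hps, Fin.sum_univ_one]
    show naryComb comb m (q 0) x = _
    congr 1
    funext j
    rw [Fin.sum_univ_one, hp0, one_mul]
  | succ n IH =>
    intro m p q x hp hps hq hqs
    simp only [naryComb]
    by_cases hpL : p (Fin.last (n+1)) = 1
    · rw [hpL, sub_self, comb_zero]
      congr 1
      funext j
      rw [Fin.sum_univ_castSucc]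
      have h0 : ∀ i : Fin (n+1), p i.castSucc = 0 := fun i =>
        zero_of_one hp hps hpL (Fin.ne_last_of_lt (Fin.castSucc_lt_last i))
      simp [h0, hpL]
    · have hpL1 : p (Fin.last (n+1)) ≤ 1 := by
        have h := Finset.single_le_sum (f := p) (fun i _ => hp i) (Finset.mem_univ (Fin.last (n+1)))
        rw [hps] at h; exact h
      have h1p : (0:ℝ) < 1 - p (Fin.last (n+1)) := by
        rcases lt_or_eq_of_le hpL1 with h | h
        · linarith
        · exact absurd h hpL
      have hpsum : ∑ i, p (Fin.castSucc i) / (1 - p (Fin.last (n+1))) = 1 := by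
        rw [← Finset.sum_div]
        rw [Fin.sum_univ_castSucc] at hps
        rw [show ∑ i, p (Fin.castSucc i) = 1 - p (Fin.last (n+1)) by linarith [hps]]
        exact div_self (ne_of_gt h1p)
      have hA : naryComb comb n (fun i => p i.castSucc / (1 - p (Fin.last (n+1))))
          (fun i => naryComb comb m (q i.castSucc) x)
          = naryComb comb m
            (fun j => ∑ i : Fin (n+1), p i.castSucc / (1 - p (Fin.last (n+1))) * q i.castSucc j) x :=
        IH m (fun i => p i.castSucc / (1 - p (Fin.last (n+1)))) (fun i => q i.castSucc) x
          (fun i => div_nonneg (hp _) h1p.le) hpsum (fun i j => hq _ j) (fun i => hqs _)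
      rw [hA]
      have hRsum : ∑ j, ∑ i : Fin (n+1), p i.castSucc / (1 - p (Fin.last (n+1))) * q i.castSucc j = 1 := by
        rw [Finset.sum_comm]
        have h1 : ∀ i : Fin (n+1), ∑ j, p i.castSucc / (1 - p (Fin.last (n+1))) * q i.castSucc j
            = p i.castSucc / (1 - p (Fin.last (n+1))) := by
          intro i
          rw [← Finset.mul_sum, hqs, mul_one]
        rw [Finset.sum_congr rfl (fun i _ => h1 i)]
        exact hpsum
      rw [bary2 comb idem comm assoc comb_one comb_zero m (1 - p (Fin.last (n+1))) _ _ x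
        h1p.le (by linarith [hp (Fin.last (n+1))])
        (fun j => Finset.sum_nonneg fun i _ => mul_nonneg (div_nonneg (hp _) h1p.le) (hq _ _))
        hRsum (fun j => hq _ j) (hqs _)]
      congr 1
      funext j
      rw [Fin.sum_univ_castSucc (f := fun i => p i * q i j), Finset.mul_sum]
      congr 1
      · exact Finset.sum_congr rfl fun i _ => by field_simp
      · ring

end



/-- Stone's theorem: binary convex operations satisfying idempotence, parametric
commutativity and parametric associativity (together with the projection rule for
binary combinations) induce, via the recursion above, a convex algebra structure:
the projection and barycenter axioms hold for all n-ary convex combinations. -/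
theorem stmt0 (comb : ℝ → A → A → A)
    (idem : ∀ p : ℝ, 0 < p → p < 1 → ∀ x, comb p x x = x)
    (comm : ∀ p : ℝ, 0 < p → p < 1 → ∀ x y, comb p x y = comb (1 - p) y x)
    (assoc : ∀ p q : ℝ, 0 < p → p < 1 → 0 < q → q < 1 → ∀ x y z,
      comb p (comb q x y) z = comb (p * q) x (comb (p * (1 - q) / (1 - p * q)) y z))
    (comb_one : ∀ x y : A, comb 1 x y = x)
    (comb_zero : ∀ x y : A, comb 0 x y = y) :
    -- Projection axiom
    (∀ (n : ℕ) (p : Fin (n + 1) → ℝ) (x : Fin (n + 1) → A) (j : Fin (n + 1)),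
      (∀ i, 0 ≤ p i) → (∑ i, p i) = 1 → p j = 1 → naryComb comb n p x = x j) ∧
    -- Barycenter axiom
    (∀ (n m : ℕ) (p : Fin (n + 1) → ℝ) (q : Fin (n + 1) → Fin (m + 1) → ℝ)
      (x : Fin (m + 1) → A),
      (∀ i, 0 ≤ p i) → (∑ i, p i) = 1 →
      (∀ i j, 0 ≤ q i j) → (∀ i, (∑ j, q i j) = 1) →
      naryComb comb n p (fun i => naryComb comb m (q i) x) =
        naryComb comb m (fun j => ∑ i, p i * q i j) x) :=
  ⟨projL comb comb_one comb_zero, baryL comb idem comm assoc comb_one comb_zero⟩
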